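/- For any number of clusters K ≥ 2, differential privacy parameters ε, δ ∈ (0,1), and Δ ∈ ℕ with Δ ≥ 1, let p = e^{−0.2ε/Δ} and r = 3(1 + log(1/δ)). Consider the mechanism that maps a histogram R ∈ ℕ^K to the distribution of (R₁ + Z₁, …, R_K + Z_K), where Z₁, …, Z_K are independent with Z_b ∼ NB(r, p). Let R, R' ∈ ℕ^K be two histograms that agree on all coordinates except two distinct clusters b ≠ b', where R_b = R'_b + Δ and R'_{b'} = R_{b'} + Δ (one client moves all Δ of its queries from cluster b to cluster b'). Then the mechanism is (2ε, 2δ)-differentially private with respect to (R, R'). -/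

import Mathlib

open scoped ENNReal

/-- Probability mass function of the negative binomial distribution `NB(r, p)`:
`Pr(X = k) = (Γ(k+r)/(k!·Γ(r))) · p^k · (1−p)^r`. -/
noncomputable def nbPMF (r p : ℝ) (k : ℕ) : ℝ :=
  (Real.Gamma (k + r) / (Nat.factorial k * Real.Gamma r)) * p ^ k *
    Real.rpow (1 - p) r

/-- Mass function of the noisy-histogram mechanism on input histogram `R`: the
distribution of `(R₁ + Z₁, …, R_K + Z_K)` with the `Z_b ∼ NB(r,p)` independent. -/
noncomputable def noisyHist (K : ℕ) (r p : ℝ) (R : Fin K → ℕ) (v : Fin K → ℕ) : ℝ≥0∞ :=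
  ∏ b, if R b ≤ v b then ENNReal.ofReal (nbPMF r p (v b - R b)) else 0

/-- The probability mass assigned by a distribution to a subset `S`. -/
noncomputable def setProb {Ω : Type*} (ν : Ω → ℝ≥0∞) (S : Set Ω) : ℝ≥0∞ :=
  ∑' x : S, ν x

open Finset

noncomputable def nbC (r : ℝ) (k : ℕ) : ℝ := ∏ j ∈ Finset.range k, (r + j) / (j + 1)

lemma nbC_zero (r : ℝ) : nbC r 0 = 1 := by simp [nbC]

lemma nbC_succ (r : ℝ) (k : ℕ) : nbC r (k + 1) = nbC r k * ((r + k) / (k + 1)) := by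
  rw [nbC, Finset.prod_range_succ]; rfl

lemma nbC_pos {r : ℝ} (hr : 0 < r) (k : ℕ) : 0 < nbC r k := by
  refine Finset.prod_pos fun j _ => div_pos (by positivity) (by positivity)

lemma nbC_rec {r : ℝ} (k : ℕ) : ((k : ℝ) + 1) * nbC r (k + 1) = (r + k) * nbC r k := by
  rw [nbC_succ]
  field_simp

/-- key derivative identity -/
lemma nbC_deriv_identity (r y : ℝ) : ∀ m : ℕ,
    (1 - y) * ∑ k ∈ range (m + 1), nbC r k * (k * y ^ (k - 1)) =
      r * ∑ k ∈ range m, nbC r k * y ^ k - m * nbC r m * y ^ m := by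
  intro m
  induction m with
  | zero => simp
  | succ m ih =>
    rw [Finset.sum_range_succ (n := m + 1), mul_add, ih, Finset.sum_range_succ (n := m)]
    have hrec : ((m : ℝ) + 1) * nbC r (m + 1) = (r + m) * nbC r m := nbC_rec m
    have hy : (m + 1 : ℕ) - 1 = m := by omega
    rw [hy]
    push_cast
    linear_combination y ^ m * hrec

/-- Partial sums of the binomial series are bounded: `(1-x)^r · Σ_{k<n} c_k x^k ≤ 1`. -/
lemma nbC_partial_sum_le {r : ℝ} (hr : 0 < r) (n : ℕ) {x : ℝ} (hx0 : 0 ≤ x) (hx1 : x < 1) :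
    (1 - x) ^ r * ∑ k ∈ range n, nbC r k * x ^ k ≤ 1 := by
  rcases Nat.eq_zero_or_pos n with rfl | hn
  · simp
  obtain ⟨m, rfl⟩ : ∃ m, n = m + 1 := ⟨n - 1, by omega⟩
  set f : ℝ → ℝ := fun y => (1 - y) ^ r * ∑ k ∈ range (m + 1), nbC r k * y ^ k with hf
  have hderiv : ∀ y ∈ Set.Ico (0 : ℝ) 1, HasDerivAt f
      ((-1 * r * (1 - y) ^ (r - 1)) * (∑ k ∈ range (m + 1), nbC r k * y ^ k) +
        (1 - y) ^ r * (∑ k ∈ range (m + 1), nbC r k * (k * y ^ (k - 1)))) y := by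
    intro y hy
    have h1 : HasDerivAt (fun y : ℝ => (1 - y) ^ r) (-1 * r * (1 - y) ^ (r - 1)) y := by
      have := (HasDerivAt.const_sub 1 (hasDerivAt_id y)).rpow_const
        (p := r) (Or.inl (show (1 : ℝ) - y ≠ 0 by intro h; linarith [hy.2]))
      simpa using this
    have h2 : HasDerivAt (fun y : ℝ => ∑ k ∈ range (m + 1), nbC r k * y ^ k)
        (∑ k ∈ range (m + 1), nbC r k * (k * y ^ (k - 1))) y := by
      refine HasDerivAt.fun_sum fun k _ => ?_
      simpa using (hasDerivAt_pow k y).const_mul (nbC r k)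
    simpa [mul_comm] using h1.fun_mul h2
  have hanti : AntitoneOn f (Set.Icc 0 x) := by
    refine antitoneOn_of_deriv_nonpos (convex_Icc 0 x) ?_ ?_ ?_
    · intro y hy
      exact (hderiv y ⟨hy.1, lt_of_le_of_lt hy.2 hx1⟩).continuousAt.continuousWithinAt
    · intro y hy
      rw [interior_Icc] at hy
      exact (hderiv y ⟨le_of_lt hy.1, lt_of_lt_of_le (lt_of_lt_of_le hy.2 le_rfl)
        (le_of_lt hx1)⟩).differentiableAt.differentiableWithinAt
    · intro y hy
      rw [interior_Icc] at hy
      have hy' : y ∈ Set.Ico (0 : ℝ) 1 := ⟨le_of_lt hy.1, lt_trans hy.2 hx1⟩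
      rw [(hderiv y hy').deriv]
      have h1y : (0 : ℝ) < 1 - y := by linarith [hy'.2]
      have key : (1 - y) * (∑ k ∈ range (m + 1), nbC r k * (k * y ^ (k - 1))) =
          r * ∑ k ∈ range m, nbC r k * y ^ k - m * nbC r m * y ^ m :=
        nbC_deriv_identity r y m
      have hsplit : (1 - y) ^ r = (1 - y) ^ (r - 1) * (1 - y) := by
        have h := (Real.rpow_add h1y (r - 1) 1).symm
        rw [Real.rpow_one] at h
        rw [show r - 1 + 1 = r by ring] at h
        exact h.symm
      rw [hsplit, Finset.sum_range_succ (n := m)]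
      have hpow : (0 : ℝ) ≤ (1 - y) ^ (r - 1) := Real.rpow_nonneg (le_of_lt h1y) _
      have hcm : 0 < nbC r m := nbC_pos hr m
      have hym : 0 ≤ y ^ m := pow_nonneg (le_of_lt hy.1) m
      calc -1 * r * (1 - y) ^ (r - 1) * (∑ k ∈ range m, nbC r k * y ^ k + nbC r m * y ^ m) +
            (1 - y) ^ (r - 1) * (1 - y) *
              (∑ k ∈ range (m + 1), nbC r k * (k * y ^ (k - 1)))
          = (1 - y) ^ (r - 1) * (-(r + m) * (nbC r m * y ^ m)) := by
            rw [mul_assoc ((1 - y) ^ (r - 1)) (1 - y), key]; ring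
        _ ≤ 0 := by
            apply mul_nonpos_of_nonneg_of_nonpos hpow
            have : 0 ≤ (r + m) * (nbC r m * y ^ m) := by positivity
            linarith
  have h0 : f 0 = 1 := by
    simp [hf, Finset.sum_range_succ']
    cases m <;> simp [nbC_zero, Finset.sum_range_succ']
  have := hanti (Set.left_mem_Icc.2 hx0) (Set.right_mem_Icc.2 hx0) hx0
  rw [h0] at this
  exact this

lemma Gamma_ratio_eq_nbC {r : ℝ} (hr : 0 < r) (k : ℕ) :
    Real.Gamma (k + r) / (k.factorial * Real.Gamma r) = nbC r k := by
  induction k with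
  | zero => simp [nbC_zero, div_self (by positivity : ((Nat.factorial 0 : ℝ)) * Real.Gamma r ≠ 0),
      Real.Gamma_pos_of_pos hr |>.ne']
  | succ k ih =>
    have hkr : (0 : ℝ) < k + r := by positivity
    have h1 : ((k + 1 : ℕ) : ℝ) + r = (↑k + r) + 1 := by push_cast; ring
    rw [h1, Real.Gamma_add_one hkr.ne', nbC_succ, ← ih, Nat.factorial_succ]
    have hG : Real.Gamma r ≠ 0 := (Real.Gamma_pos_of_pos hr).ne'
    have hf : (k.factorial : ℝ) ≠ 0 := by positivity
    push_cast
    field_simp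
    ring

lemma nbPMF_eq {r p : ℝ} (hr : 0 < r) (k : ℕ) :
    nbPMF r p k = nbC r k * p ^ k * (1 - p) ^ r := by
  rw [nbPMF, Gamma_ratio_eq_nbC hr]
  rfl

lemma nbPMF_pos {r p : ℝ} (hr : 0 < r) (hp0 : 0 < p) (hp1 : p < 1) (k : ℕ) :
    0 < nbPMF r p k := by
  rw [nbPMF_eq hr]
  have h1 : (0:ℝ) < 1 - p := by linarith
  have := nbC_pos hr k
  positivity

lemma nbPMF_nonneg {r p : ℝ} (hr : 0 < r) (hp0 : 0 < p) (hp1 : p < 1) (k : ℕ) :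
    0 ≤ nbPMF r p k := (nbPMF_pos hr hp0 hp1 k).le

lemma nbPMF_succ {r p : ℝ} (hr : 0 < r) (k : ℕ) :
    nbPMF r p (k + 1) = nbPMF r p k * ((r + k) / (k + 1)) * p := by
  rw [nbPMF_eq hr, nbPMF_eq hr, nbC_succ]
  push_cast
  ring

lemma nbPMF_shift {r p : ℝ} (hr : 0 < r) (d k : ℕ) :
    nbPMF r p (k + d) = nbPMF r p k * p ^ d *
      ∏ i ∈ range d, ((r + k + i) / (k + 1 + i)) := by
  induction d with
  | zero => simp
  | succ d ih =>
    have : k + (d + 1) = (k + d) + 1 := by omega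
    rw [this, nbPMF_succ hr, ih, Finset.prod_range_succ]
    push_cast
    ring

/-- The ratio `q(k)/q(k+d)` is at most `p^{-d}`. -/
lemma nbPMF_le_shift {r p : ℝ} (hr : 1 ≤ r) (hp0 : 0 < p) (hp1 : p < 1) (d k : ℕ) :
    nbPMF r p k ≤ p⁻¹ ^ d * nbPMF r p (k + d) := by
  have hr0 : (0:ℝ) < r := by linarith
  rw [nbPMF_shift hr0]
  have hq := nbPMF_pos hr0 hp0 hp1 k
  have hprod : (1:ℝ) ≤ ∏ i ∈ range d, ((r + k + i) / (k + 1 + i)) := by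
    have h := Finset.prod_le_prod (s := range d) (f := fun _ => (1:ℝ))
      (g := fun i : ℕ => ((r + (k:ℝ) + i) / ((k:ℝ) + 1 + i)))
      (fun i _ => by norm_num) (fun i _ => by
        rw [le_div_iff₀ (by positivity)]
        simp only [one_mul]
        linarith)
    simpa using h
  have hpd : (0:ℝ) < p ^ d := by positivity
  calc nbPMF r p k = p⁻¹ ^ d * (nbPMF r p k * p ^ d * 1) := by
        field_simp
        rw [div_pow, one_pow, one_div_mul_cancel hpd.ne']
    _ ≤ p⁻¹ ^ d * (nbPMF r p k * p ^ d * ∏ i ∈ range d, ((r + k + i) / (k + 1 + i))) := by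
        apply mul_le_mul_of_nonneg_left _ (by positivity)
        apply mul_le_mul_of_nonneg_left hprod (by positivity)

/-- The ratio `q(k+d)/q(k)` is at most `exp(d(r-1)/(k₀+1))` for `k ≥ k₀`. -/
lemma nbPMF_shift_le {r p : ℝ} (hr : 1 ≤ r) (hp0 : 0 < p) (hp1 : p ≤ 1)
    (d k k₀ : ℕ) (hk : k₀ ≤ k) :
    nbPMF r p (k + d) ≤ Real.exp (d * (r - 1) / (k₀ + 1)) * nbPMF r p k := by
  have hr0 : (0:ℝ) < r := by linarith
  rw [nbPMF_shift hr0]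
  have hq : 0 ≤ nbPMF r p k := by
    rw [nbPMF_eq hr0]
    have := nbC_pos hr0 k
    have h1 : (0:ℝ) ≤ 1 - p := by linarith
    positivity
  have hpd : p ^ d ≤ 1 := pow_le_one₀ hp0.le hp1
  have hprod : ∏ i ∈ range d, ((r + k + i) / (k + 1 + i)) ≤
      Real.exp (d * (r - 1) / (k₀ + 1)) := by
    calc ∏ i ∈ range d, ((r + k + i) / (k + 1 + i))
        ≤ ∏ _i ∈ range d, Real.exp ((r - 1) / (k₀ + 1)) := by
          refine Finset.prod_le_prod (fun i _ => by positivity) fun i hi => ?_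
          have hden : (0:ℝ) < (k:ℝ) + 1 + i := by positivity
          rw [div_le_iff₀ hden]
          have h1 : (r + k + i) = 1 * ((k:ℝ) + 1 + i) + (r - 1) := by ring
          have hexp : 1 + (r - 1) / ((k:ℝ) + 1 + i) ≤ Real.exp ((r - 1) / (k₀ + 1)) := by
            have step : (r - 1) / ((k:ℝ) + 1 + i) ≤ (r - 1) / ((k₀:ℝ) + 1) := by
              apply div_le_div_of_nonneg_left (by linarith) (by positivity)
              push_cast
              have : (k₀:ℝ) ≤ k := by exact_mod_cast hk
              linarith
            calc 1 + (r - 1) / ((k:ℝ) + 1 + i) ≤ 1 + (r - 1) / ((k₀:ℝ) + 1) := by linarith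
              _ ≤ Real.exp ((r - 1) / (k₀ + 1)) := by
                  have := Real.add_one_le_exp ((r - 1) / ((k₀:ℝ) + 1))
                  linarith
          calc r + k + i = (1 + (r - 1) / ((k:ℝ) + 1 + i)) * ((k:ℝ) + 1 + i) := by
                field_simp
                ring
            _ ≤ Real.exp ((r - 1) / (k₀ + 1)) * ((k:ℝ) + 1 + i) :=
                mul_le_mul_of_nonneg_right hexp hden.le
      _ = Real.exp (d * (r - 1) / (k₀ + 1)) := by
          rw [Finset.prod_const, ← Real.exp_nat_mul]
          congr 1
          field_simp
          rw [Finset.card_range]; ring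
    
  calc nbPMF r p k * p ^ d * ∏ i ∈ range d, ((r + k + i) / (k + 1 + i))
      ≤ nbPMF r p k * 1 * Real.exp (d * (r - 1) / (k₀ + 1)) := by
        apply mul_le_mul (by apply mul_le_mul_of_nonneg_left hpd hq) hprod
          (Finset.prod_nonneg fun i _ => by positivity) (by positivity)
    _ = Real.exp (d * (r - 1) / (k₀ + 1)) * nbPMF r p k := by ring

lemma nbPMF_sum_le_one {r p : ℝ} (hr : 0 < r) (hp0 : 0 ≤ p) (hp1 : p < 1) (n : ℕ) :
    ∑ k ∈ range n, nbPMF r p k ≤ 1 := by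
  have h : ∑ k ∈ range n, nbPMF r p k = (1 - p) ^ r * ∑ k ∈ range n, nbC r k * p ^ k := by
    rw [Finset.mul_sum]
    exact Finset.sum_congr rfl fun k _ => by rw [nbPMF_eq hr]; ring
  rw [h]
  exact nbC_partial_sum_le hr n hp0 hp1

lemma nbPMF_head_le {r p : ℝ} (hr : 0 < r) (hp0 : 0 < p) (hp1 : p < 1) (n : ℕ) :
    ∑ k ∈ range n, nbPMF r p k ≤ p⁻¹ ^ (2 * (n - 1)) * ((1 + p + p ^ 2) ^ r)⁻¹ := by
  have hp3 : p ^ 3 < 1 := pow_lt_one₀ hp0.le hp1 (by norm_num)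
  have hp3' : (0:ℝ) ≤ p ^ 3 := by positivity
  have h1p : (0:ℝ) < 1 - p := by linarith
  have hB : (0:ℝ) < 1 + p + p ^ 2 := by positivity
  -- termwise Chernoff weighting
  have step1 : ∑ k ∈ range n, nbPMF r p k ≤
      p⁻¹ ^ (2 * (n - 1)) * ((1 - p) ^ r * ∑ k ∈ range n, nbC r k * (p ^ 3) ^ k) := by
    rw [Finset.mul_sum, Finset.mul_sum]
    refine Finset.sum_le_sum fun k hk => ?_
    rw [nbPMF_eq hr]
    have hk' : k ≤ n - 1 := by have := Finset.mem_range.1 hk; omega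
    have hpow : p ^ (2 * (n - 1)) ≤ p ^ (2 * k) :=
      pow_le_pow_of_le_one hp0.le hp1.le (by omega)
    have hc : 0 ≤ nbC r k := (nbC_pos hr k).le
    have hrp : (0:ℝ) ≤ (1 - p) ^ r := Real.rpow_nonneg h1p.le r
    have key : p ^ k ≤ p⁻¹ ^ (2 * (n - 1)) * (p ^ 3) ^ k := by
      rw [inv_pow, ← div_eq_inv_mul, le_div_iff₀ (by positivity)]
      calc p ^ k * p ^ (2 * (n - 1)) ≤ p ^ k * p ^ (2 * k) :=
            mul_le_mul_of_nonneg_left hpow (by positivity)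
        _ = (p ^ 3) ^ k := by rw [← pow_add, ← pow_mul]; ring_nf
    calc nbC r k * p ^ k * (1 - p) ^ r
        ≤ nbC r k * (p⁻¹ ^ (2 * (n - 1)) * (p ^ 3) ^ k) * (1 - p) ^ r := by
          apply mul_le_mul_of_nonneg_right _ hrp
          exact mul_le_mul_of_nonneg_left key hc
      _ = p⁻¹ ^ (2 * (n - 1)) * ((1 - p) ^ r * (nbC r k * (p ^ 3) ^ k)) := by ring
  have step2 : (1 - p) ^ r * ∑ k ∈ range n, nbC r k * (p ^ 3) ^ k ≤
      ((1 + p + p ^ 2) ^ r)⁻¹ := by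
    have hA := nbC_partial_sum_le hr n hp3' hp3
    have hfact : (1:ℝ) - p ^ 3 = (1 - p) * (1 + p + p ^ 2) := by ring
    rw [hfact, Real.mul_rpow h1p.le hB.le] at hA
    have hBpos : (0:ℝ) < (1 + p + p ^ 2) ^ r := Real.rpow_pos_of_pos hB r
    calc (1 - p) ^ r * ∑ k ∈ range n, nbC r k * (p ^ 3) ^ k
        = ((1 - p) ^ r * (1 + p + p ^ 2) ^ r * ∑ k ∈ range n, nbC r k * (p ^ 3) ^ k) *
            ((1 + p + p ^ 2) ^ r)⁻¹ := by field_simp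
      _ ≤ 1 * ((1 + p + p ^ 2) ^ r)⁻¹ :=
          mul_le_mul_of_nonneg_right hA (by positivity)
      _ = ((1 + p + p ^ 2) ^ r)⁻¹ := one_mul _
  calc ∑ k ∈ range n, nbPMF r p k
      ≤ p⁻¹ ^ (2 * (n - 1)) * ((1 - p) ^ r * ∑ k ∈ range n, nbC r k * (p ^ 3) ^ k) := step1
    _ ≤ p⁻¹ ^ (2 * (n - 1)) * ((1 + p + p ^ 2) ^ r)⁻¹ :=
        mul_le_mul_of_nonneg_left step2 (by positivity)

section Numeric

variable {ε δ : ℝ} {Δ : ℕ} {p r : ℝ}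

lemma hr_ge_three (hδ : δ ∈ Set.Ioo (0:ℝ) 1) (hr : r = 3 * (1 + Real.log (1 / δ))) :
    3 ≤ r := by
  have h1 : (1:ℝ) < 1 / δ := by
    rw [lt_div_iff₀ hδ.1]; linarith [hδ.2]
  have := Real.log_pos h1
  rw [hr]; nlinarith

lemma hp_pos (hp : p = Real.exp (-(0.2 * ε / (Δ : ℝ)))) : 0 < p := hp ▸ Real.exp_pos _

lemma hp_lt_one (hε : ε ∈ Set.Ioo (0:ℝ) 1) (hΔ : 1 ≤ Δ)
    (hp : p = Real.exp (-(0.2 * ε / (Δ : ℝ)))) : p < 1 := by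
  rw [hp, Real.exp_lt_one_iff]
  have hΔ' : (0:ℝ) < Δ := by exact_mod_cast hΔ
  have : 0 < 0.2 * ε / (Δ:ℝ) := div_pos (by nlinarith [hε.1]) hΔ'
  linarith

lemma hp_ge (hε : ε ∈ Set.Ioo (0:ℝ) 1) (hΔ : 1 ≤ Δ)
    (hp : p = Real.exp (-(0.2 * ε / (Δ : ℝ)))) : 0.8 ≤ p := by
  have hΔ' : (1:ℝ) ≤ Δ := by exact_mod_cast hΔ
  have h1 : 0.2 * ε / (Δ:ℝ) ≤ 0.2 := by
    rw [div_le_iff₀ (by linarith)]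
    nlinarith [hε.1, hε.2]
  have := Real.add_one_le_exp (-(0.2 * ε / (Δ:ℝ)))
  rw [hp]
  linarith

lemma hpow_delta (hΔ : 1 ≤ Δ) (hp : p = Real.exp (-(0.2 * ε / (Δ : ℝ)))) :
    p ^ Δ = Real.exp (-(0.2 * ε)) := by
  have hΔ' : ((Δ:ℝ)) ≠ 0 := by
    have : (0:ℝ) < Δ := by exact_mod_cast hΔ
    linarith
  rw [hp, ← Real.exp_nat_mul]
  congr 1
  field_simp

end Numeric

section Ratio

variable {ε δ : ℝ} {Δ : ℕ} {p r : ℝ}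

/-- Direction "subtract Δ": `q(k) ≤ e^{0.2ε} q(k+Δ)`. -/
lemma ratio_up (hε : ε ∈ Set.Ioo (0:ℝ) 1) (hδ : δ ∈ Set.Ioo (0:ℝ) 1) (hΔ : 1 ≤ Δ)
    (hp : p = Real.exp (-(0.2 * ε / (Δ : ℝ)))) (hr : r = 3 * (1 + Real.log (1 / δ)))
    (k : ℕ) :
    nbPMF r p k ≤ Real.exp (0.2 * ε) * nbPMF r p (k + Δ) := by
  have hr3 := hr_ge_three hδ hr
  have hp0 := hp_pos hp
  have hp1 := hp_lt_one hε hΔ hp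
  have h := nbPMF_le_shift (r := r) (p := p) (by linarith) hp0 hp1 Δ k
  have hpe : p⁻¹ ^ Δ = Real.exp (0.2 * ε) := by
    rw [inv_pow, hpow_delta hΔ hp, ← Real.exp_neg, neg_neg]
  rwa [hpe] at h

/-- Direction "add Δ", good region: `q(k+Δ) ≤ e^{ε} q(k)` for `k ≥ k₀ = ⌈Δr/ε⌉`. -/
lemma ratio_down (hε : ε ∈ Set.Ioo (0:ℝ) 1) (hδ : δ ∈ Set.Ioo (0:ℝ) 1) (hΔ : 1 ≤ Δ)
    (hp : p = Real.exp (-(0.2 * ε / (Δ : ℝ)))) (hr : r = 3 * (1 + Real.log (1 / δ)))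
    (k : ℕ) (hk : ⌈(Δ:ℝ) * r / ε⌉₊ ≤ k) :
    nbPMF r p (k + Δ) ≤ Real.exp ε * nbPMF r p k := by
  have hr3 := hr_ge_three hδ hr
  have hp0 := hp_pos hp
  have hp1 := hp_lt_one hε hΔ hp
  set k₀ := ⌈(Δ:ℝ) * r / ε⌉₊ with hk₀
  have h := nbPMF_shift_le (r := r) (p := p) (by linarith) hp0 hp1.le Δ k k₀ hk
  have hq := nbPMF_nonneg (by linarith : (0:ℝ) < r) hp0 hp1 k
  refine h.trans (mul_le_mul_of_nonneg_right ?_ hq)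
  rw [Real.exp_le_exp]
  have hceil : (Δ:ℝ) * r / ε ≤ (k₀ : ℝ) := Nat.le_ceil _
  have hΔ' : (1:ℝ) ≤ (Δ:ℝ) := by exact_mod_cast hΔ
  have hεpos := hε.1
  have hk₀pos : (0:ℝ) < (k₀:ℝ) + 1 := by positivity
  rw [div_le_iff₀ hk₀pos]
  have h2 : (Δ:ℝ) * r ≤ ε * ((k₀:ℝ) + 1) := by
    rw [div_le_iff₀ hεpos] at hceil
    nlinarith
  nlinarith

lemma exp_11_15_le : Real.exp (11 / 15) ≤ 2.44 := by
  have h := Real.exp_one_lt_d9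
  have h15 : (Real.exp (11 / 15)) ^ (15 : ℕ) = Real.exp 11 := by
    rw [← Real.exp_nat_mul]; norm_num
  have h11 : Real.exp 11 = (Real.exp 1) ^ (11 : ℕ) := by rw [← Real.exp_nat_mul]; norm_num
  have hpows : Real.exp (11 / 15) ^ (15 : ℕ) ≤ 2.44 ^ (15 : ℕ) := by
    rw [h15, h11]
    calc (Real.exp 1) ^ (11 : ℕ) ≤ 2.7182818286 ^ (11 : ℕ) :=
          pow_le_pow_left₀ (Real.exp_pos 1).le h.le 11
      _ ≤ 2.44 ^ (15 : ℕ) := by norm_num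
  exact le_of_pow_le_pow_left₀ (by norm_num) (by norm_num) hpows

/-- The numeric tail bound: mass of the first `Δ + ⌈Δr/ε⌉` values is at most `δ`. -/
lemma tail_le_delta (hε : ε ∈ Set.Ioo (0:ℝ) 1) (hδ : δ ∈ Set.Ioo (0:ℝ) 1) (hΔ : 1 ≤ Δ)
    (hp : p = Real.exp (-(0.2 * ε / (Δ : ℝ)))) (hr : r = 3 * (1 + Real.log (1 / δ))) :
    ∑ k ∈ range (Δ + ⌈(Δ:ℝ) * r / ε⌉₊), nbPMF r p k ≤ δ := by
  have hr3 := hr_ge_three hδ hr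
  have hp0 := hp_pos hp
  have hp1 := hp_lt_one hε hΔ hp
  have hp8 := hp_ge hε hΔ hp
  set k₀ := ⌈(Δ:ℝ) * r / ε⌉₊ with hk₀
  set n := Δ + k₀ with hn
  have hmain := nbPMF_head_le (r := r) (p := p) (by linarith) hp0 hp1 n
  refine hmain.trans ?_
  have hΔ' : (1:ℝ) ≤ (Δ:ℝ) := by exact_mod_cast hΔ
  have hεpos := hε.1
  have hε1 := hε.2
  have hceil : (k₀ : ℝ) < (Δ:ℝ) * r / ε + 1 := Nat.ceil_lt_add_one (by positivity)
  have hfac1 : p⁻¹ ^ (2 * (n - 1)) ≤ Real.exp (0.8 + 0.4 * r) := by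
    have hinv : p⁻¹ = Real.exp (0.2 * ε / (Δ:ℝ)) := by
      rw [hp, ← Real.exp_neg, neg_neg]
    rw [hinv, ← Real.exp_nat_mul, Real.exp_le_exp]
    have hcast : ((2 * (n - 1) : ℕ) : ℝ) = 2 * ((Δ:ℝ) + (k₀:ℝ) - 1) := by
      have h1 : (1:ℕ) ≤ Δ + k₀ := by omega
      rw [hn]
      push_cast [Nat.cast_sub h1]
      ring
    rw [hcast]
    have h' : ((k₀:ℝ) - 1) * ε < (Δ:ℝ) * r :=
      (lt_div_iff₀ hεpos).1 (by linarith : (k₀:ℝ) - 1 < (Δ:ℝ) * r / ε)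
    have hK : ε * (k₀:ℝ) ≤ (Δ:ℝ) * r + ε := by nlinarith
    rw [mul_comm, div_mul_eq_mul_div, div_le_iff₀ (by linarith : (0:ℝ) < (Δ:ℝ))]
    nlinarith [mul_le_mul_of_nonneg_left hK (by norm_num : (0:ℝ) ≤ 0.4),
      mul_le_mul_of_nonneg_right hΔ' (by linarith : (0:ℝ) ≤ 0.4 * r)]
  have hfac2 : ((1 + p + p ^ 2) ^ r)⁻¹ ≤ Real.exp (-(11 / 15 * r)) := by
    have hB : (2.44 : ℝ) ≤ 1 + p + p ^ 2 := by nlinarith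
    rw [Real.exp_neg]
    apply inv_anti₀ (Real.exp_pos _)
    rw [Real.exp_mul]
    exact Real.rpow_le_rpow (Real.exp_pos _).le (exp_11_15_le.trans hB) (by linarith)
  calc p⁻¹ ^ (2 * (n - 1)) * ((1 + p + p ^ 2) ^ r)⁻¹
      ≤ Real.exp (0.8 + 0.4 * r) * Real.exp (-(11 / 15 * r)) := by
        apply mul_le_mul hfac1 hfac2 (by positivity) (Real.exp_pos _).le
    _ = Real.exp (0.8 + 0.4 * r - 11 / 15 * r) := by rw [← Real.exp_add]; ring_nf
    _ ≤ δ := by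
        have hlog : Real.log (1 / δ) = -Real.log δ := by
          rw [one_div, Real.log_inv]
        have hrr : 0.8 + 0.4 * r - 11 / 15 * r = 0.8 - r / 3 := by ring
        rw [hrr, hr, hlog]
        have : 0.8 - 3 * (1 + -Real.log δ) / 3 = -0.2 + Real.log δ := by ring
        rw [this, Real.exp_add, Real.exp_log hδ.1]
        have h1 : Real.exp (-0.2) ≤ 1 := by
          rw [Real.exp_le_one_iff]; norm_num
        nlinarith [hδ.1]

end Ratio

section ENN

open ENNReal

/-- Factorization of a tsum of products over a finite product of `ℕ`-indexed coordinates. -/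
lemma tsum_pi_prod : ∀ (K : ℕ) (g : Fin K → ℕ → ℝ≥0∞),
    ∑' v : Fin K → ℕ, ∏ b, g b (v b) = ∏ b, ∑' k : ℕ, g b k := by
  intro K
  induction K with
  | zero =>
    intro g
    simp only [Finset.univ_eq_empty, Finset.prod_empty]
    exact tsum_eq_single (fun i => i.elim0) fun v hv =>
      absurd (Subsingleton.elim v _) hv
  | succ K ih =>
    intro g
    rw [← Equiv.tsum_eq (Fin.consEquiv (fun _ : Fin (K + 1) => ℕ))
      (fun v => ∏ b, g b (v b))]
    have h1 : ∀ x : ℕ × (Fin K → ℕ),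
        (∏ b, g b (((Fin.consEquiv (fun _ : Fin (K + 1) => ℕ)) x) b)) =
          g 0 x.1 * ∏ i : Fin K, g i.succ (x.2 i) := by
      rintro ⟨a, w⟩
      rw [Fin.prod_univ_succ]
      simp [Fin.consEquiv]
    calc ∑' x : ℕ × (Fin K → ℕ), ∏ b, g b (((Fin.consEquiv (fun _ : Fin (K + 1) => ℕ)) x) b)
        = ∑' (a : ℕ) (w : Fin K → ℕ), g 0 a * ∏ i : Fin K, g i.succ (w i) := by
          rw [ENNReal.tsum_prod']
          exact tsum_congr fun a => tsum_congr fun w => h1 (a, w)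
      _ = (∑' a : ℕ, g 0 a) * ∏ i : Fin K, ∑' k : ℕ, g i.succ k := by
          rw [← ENNReal.tsum_mul_right]
          refine tsum_congr fun a => ?_
          rw [ENNReal.tsum_mul_left, ih (fun i => g i.succ)]
      _ = ∏ b : Fin (K + 1), ∑' k : ℕ, g b k := by
          rw [Fin.prod_univ_succ]

lemma sum_shift_if (f : ℕ → ℝ≥0∞) (R0 : ℕ) : ∀ m : ℕ,
    ∑ k ∈ Finset.range (R0 + m), (if R0 ≤ k then f (k - R0) else 0) =
      ∑ j ∈ Finset.range m, f j := by
  intro m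
  induction m with
  | zero =>
    simp only [Nat.add_zero, Finset.range_zero, Finset.sum_empty]
    refine Finset.sum_eq_zero fun k hk => ?_
    have hk' := Finset.mem_range.1 hk
    rw [if_neg (by omega : ¬ R0 ≤ k)]
  | succ m ih =>
    rw [show R0 + (m + 1) = (R0 + m) + 1 by omega, Finset.sum_range_succ,
      Finset.sum_range_succ, ih, if_pos (by omega : R0 ≤ R0 + m)]
    congr 2
    omega


end ENN

section Main

lemma oneSided
    (K : ℕ) (ε δ : ℝ) (hε : ε ∈ Set.Ioo (0 : ℝ) 1) (hδ : δ ∈ Set.Ioo (0 : ℝ) 1)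
    (Δ : ℕ) (hΔ : 1 ≤ Δ) (p r : ℝ)
    (hp : p = Real.exp (-(0.2 * ε / (Δ : ℝ))))
    (hr : r = 3 * (1 + Real.log (1 / δ)))
    (R R' : Fin K → ℕ) (b b' : Fin K) (hbb : b ≠ b')
    (hb : R b = R' b + Δ) (hb' : R' b' = R b' + Δ)
    (hrest : ∀ c, c ≠ b → c ≠ b' → R c = R' c)
    (S : Set (Fin K → ℕ)) :
    setProb (noisyHist K r p R) S ≤
      ENNReal.ofReal (Real.exp (2 * ε)) * setProb (noisyHist K r p R') S +
        ENNReal.ofReal (2 * δ) := by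
  have hr3 := hr_ge_three hδ hr
  have hr0 : (0:ℝ) < r := by linarith
  have hp0 := hp_pos hp
  have hp1 := hp_lt_one hε hΔ hp
  set k₀ := ⌈(Δ:ℝ) * r / ε⌉₊ with hk₀
  set n := Δ + k₀ with hn
  set t := R b' + n with ht
  -- pointwise bound on the good region
  have good : ∀ v : Fin K → ℕ, t ≤ v b' →
      noisyHist K r p R v ≤ ENNReal.ofReal (Real.exp (2 * ε)) * noisyHist K r p R' v := by
    intro v hv
    set w : Fin K → ℝ≥0∞ := fun c =>
      if c = b then ENNReal.ofReal (Real.exp (0.2 * ε))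
      else if c = b' then ENNReal.ofReal (Real.exp ε) else 1 with hw
    have hcomp : ∀ c : Fin K,
        (if R c ≤ v c then ENNReal.ofReal (nbPMF r p (v c - R c)) else 0) ≤
          w c * (if R' c ≤ v c then ENNReal.ofReal (nbPMF r p (v c - R' c)) else 0) := by
      intro c
      by_cases hcb : c = b
      · subst hcb
        rw [hw]
        simp only [eq_self_iff_true, if_true]
        by_cases hvb : R c ≤ v c
        · rw [if_pos hvb, if_pos (by omega : R' c ≤ v c),
            ← ENNReal.ofReal_mul (Real.exp_nonneg _)]
          apply ENNReal.ofReal_le_ofReal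
          have hru := ratio_up hε hδ hΔ hp hr (v c - R c)
          have harg : v c - R' c = (v c - R c) + Δ := by omega
          rw [harg]
          exact hru
        · rw [if_neg hvb]
          exact zero_le
      · by_cases hcb' : c = b'
        · subst hcb'
          have h1 : R c ≤ v c := by omega
          have h2 : R' c ≤ v c := by omega
          rw [hw]
          simp only [if_neg hcb, eq_self_iff_true, if_true]
          rw [if_pos h1, if_pos h2, ← ENNReal.ofReal_mul (Real.exp_nonneg _)]
          apply ENNReal.ofReal_le_ofReal
          have hj : k₀ ≤ v c - R' c := by omega
          have hrd := ratio_down hε hδ hΔ hp hr (v c - R' c) hj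
          have harg : v c - R c = (v c - R' c) + Δ := by omega
          rw [harg]
          exact hrd
        · rw [hw]
          simp only [if_neg hcb, if_neg hcb', one_mul]
          rw [hrest c hcb hcb']
    have hprodw : ∏ c, w c = ENNReal.ofReal (Real.exp (0.2 * ε)) *
        ENNReal.ofReal (Real.exp ε) := by
      have hsub : ({b, b'} : Finset (Fin K)) ⊆ Finset.univ := Finset.subset_univ _
      have hout : ∀ x ∈ Finset.univ, x ∉ ({b, b'} : Finset (Fin K)) → w x = 1 := by
        intro x _ hx
        rw [Finset.mem_insert, Finset.mem_singleton] at hx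
        push_neg at hx
        rw [hw]
        simp only [if_neg hx.1, if_neg hx.2]
      rw [← Finset.prod_subset hsub hout, Finset.prod_pair hbb, hw]
      simp only [eq_self_iff_true, if_true, if_neg (Ne.symm hbb), if_neg hbb]
    calc noisyHist K r p R v
        ≤ ∏ c, (w c * (if R' c ≤ v c then ENNReal.ofReal (nbPMF r p (v c - R' c)) else 0)) :=
          Finset.prod_le_prod' fun i _ => hcomp i
      _ = (∏ c, w c) * noisyHist K r p R' v := by
          rw [Finset.prod_mul_distrib]; rfl
      _ = (ENNReal.ofReal (Real.exp (0.2 * ε)) * ENNReal.ofReal (Real.exp ε)) *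
            noisyHist K r p R' v := by rw [hprodw]
      _ ≤ ENNReal.ofReal (Real.exp (2 * ε)) * noisyHist K r p R' v := by
          apply mul_le_mul_of_nonneg_right _ zero_le
          rw [← ENNReal.ofReal_mul (Real.exp_nonneg _), ← Real.exp_add]
          apply ENNReal.ofReal_le_ofReal
          rw [Real.exp_le_exp]
          have := hε.1
          linarith
  -- the bad region has small mass
  have hmass : ∀ c : Fin K,
      (∑' k : ℕ, if R c ≤ k then ENNReal.ofReal (nbPMF r p (k - R c)) else 0) ≤ 1 := by
    intro c
    rw [ENNReal.tsum_eq_iSup_nat]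
    refine iSup_le fun i => ?_
    calc ∑ k ∈ Finset.range i, (if R c ≤ k then ENNReal.ofReal (nbPMF r p (k - R c)) else 0)
        ≤ ∑ k ∈ Finset.range (R c + i),
            (if R c ≤ k then ENNReal.ofReal (nbPMF r p (k - R c)) else 0) :=
          Finset.sum_le_sum_of_subset (Finset.range_subset_range.2 (by omega))
      _ = ∑ j ∈ Finset.range i, ENNReal.ofReal (nbPMF r p j) :=
          sum_shift_if (fun j => ENNReal.ofReal (nbPMF r p j)) (R c) i
      _ = ENNReal.ofReal (∑ j ∈ Finset.range i, nbPMF r p j) :=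
          (ENNReal.ofReal_sum_of_nonneg fun j _ => nbPMF_nonneg hr0 hp0 hp1 j).symm
      _ ≤ 1 := by
          rw [← ENNReal.ofReal_one]
          exact ENNReal.ofReal_le_ofReal (nbPMF_sum_le_one hr0 hp0.le hp1 i)
  have bad : (∑' v : Fin K → ℕ, if t ≤ v b' then 0 else noisyHist K r p R v) ≤
      ENNReal.ofReal (2 * δ) := by
    set h : Fin K → ℕ → ℝ≥0∞ := fun c k =>
      if c = b' then (if t ≤ k then 0 else
        (if R c ≤ k then ENNReal.ofReal (nbPMF r p (k - R c)) else 0))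
      else (if R c ≤ k then ENNReal.ofReal (nbPMF r p (k - R c)) else 0) with hh
    have heq : ∀ v : Fin K → ℕ,
        (if t ≤ v b' then 0 else noisyHist K r p R v) = ∏ c, h c (v c) := by
      intro v
      by_cases hvt : t ≤ v b'
      · rw [if_pos hvt]
        symm
        apply Finset.prod_eq_zero (Finset.mem_univ b')
        rw [hh]
        simp only [eq_self_iff_true, if_true, if_pos hvt]
      · rw [if_neg hvt]
        refine Finset.prod_congr rfl fun c _ => ?_
        by_cases hc : c = b'
        · subst hc
          rw [hh]
          simp only [eq_self_iff_true, if_true, if_neg hvt]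
        · rw [hh]
          simp only [if_neg hc]
    rw [tsum_congr heq, tsum_pi_prod K h]
    have hone : ∀ c : Fin K, c ∈ Finset.univ →
        (∑' k : ℕ, h c k) ≤ (if c = b' then ENNReal.ofReal δ else 1) := by
      intro c _
      by_cases hc : c = b'
      · subst hc
        rw [if_pos rfl]
        have hsupp : ∀ k : ℕ, k ∉ Finset.range t → h c k = 0 := by
          intro k hk
          rw [Finset.mem_range, not_lt] at hk
          rw [hh]
          simp only [eq_self_iff_true, if_true, if_pos hk]
        rw [tsum_eq_sum hsupp]
        have hcongr : ∀ k ∈ Finset.range t, h c k =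
            (if R c ≤ k then ENNReal.ofReal (nbPMF r p (k - R c)) else 0) := by
          intro k hk
          rw [Finset.mem_range] at hk
          rw [hh]
          simp only [eq_self_iff_true, if_true, if_neg (by omega : ¬ t ≤ k)]
        rw [Finset.sum_congr rfl hcongr, ht,
          sum_shift_if (fun j => ENNReal.ofReal (nbPMF r p j)) (R c) n,
          ← ENNReal.ofReal_sum_of_nonneg fun j _ => nbPMF_nonneg hr0 hp0 hp1 j]
        exact ENNReal.ofReal_le_ofReal (tail_le_delta hε hδ hΔ hp hr)
      · rw [if_neg hc]
        have : ∀ k, h c k = (if R c ≤ k then ENNReal.ofReal (nbPMF r p (k - R c)) else 0) := by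
          intro k; rw [hh]; simp only [if_neg hc]
        rw [tsum_congr this]
        exact hmass c
    calc ∏ c, ∑' k : ℕ, h c k ≤ ∏ c, (if c = b' then ENNReal.ofReal δ else 1) :=
          Finset.prod_le_prod' hone
      _ = ENNReal.ofReal δ := by
          rw [Finset.prod_ite_eq' Finset.univ b' (fun _ => ENNReal.ofReal δ)]
          simp
      _ ≤ ENNReal.ofReal (2 * δ) := ENNReal.ofReal_le_ofReal (by linarith [hδ.1])
  -- assemble
  calc setProb (noisyHist K r p R) S
      = ∑' x : S, ((if t ≤ (x : Fin K → ℕ) b' then noisyHist K r p R ↑x else 0) +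
          (if t ≤ (x : Fin K → ℕ) b' then 0 else noisyHist K r p R ↑x)) := by
        refine tsum_congr fun x => ?_
        split <;> simp
    _ = (∑' x : S, if t ≤ (x : Fin K → ℕ) b' then noisyHist K r p R ↑x else 0) +
          ∑' x : S, (if t ≤ (x : Fin K → ℕ) b' then 0 else noisyHist K r p R ↑x) :=
        ENNReal.tsum_add
    _ ≤ ENNReal.ofReal (Real.exp (2 * ε)) * setProb (noisyHist K r p R') S +
          ENNReal.ofReal (2 * δ) := by
        apply add_le_add
        · calc (∑' x : S, if t ≤ (x : Fin K → ℕ) b' then noisyHist K r p R ↑x else 0)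
              ≤ ∑' x : S, ENNReal.ofReal (Real.exp (2 * ε)) * noisyHist K r p R' ↑x := by
                refine ENNReal.tsum_le_tsum fun x => ?_
                split
                · exact good _ (by assumption)
                · exact zero_le
            _ = ENNReal.ofReal (Real.exp (2 * ε)) * setProb (noisyHist K r p R') S := by
                rw [ENNReal.tsum_mul_left]; rfl
        · calc (∑' x : S, if t ≤ (x : Fin K → ℕ) b' then 0 else noisyHist K r p R ↑x)
              = ∑' v : Fin K → ℕ, S.indicator
                  (fun v => if t ≤ v b' then 0 else noisyHist K r p R v) v :=
                _root_.tsum_subtype S (fun v => if t ≤ v b' then 0 else noisyHist K r p R v)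
            _ ≤ ∑' v : Fin K → ℕ, (if t ≤ v b' then 0 else noisyHist K r p R v) :=
                ENNReal.tsum_le_tsum fun v => Set.indicator_le_self _ _ v
            _ ≤ ENNReal.ofReal (2 * δ) := bad

end Main

/-- Simple case of the DP analysis: for `K ≥ 2` clusters, `ε, δ ∈ (0,1)`, `Δ ≥ 1`,
`p = e^{−0.2ε/Δ}`, `r = 3(1 + log(1/δ))`, if two histograms `R, R'` agree everywhere
except on two distinct clusters `b ≠ b'` with `R_b = R'_b + Δ` and `R'_{b'} = R_{b'} + Δ`
(one client moves all `Δ` of its queries from cluster `b` to cluster `b'`), then the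
noisy-histogram mechanism is `(2ε, 2δ)`-differentially private w.r.t. `(R, R')`. -/
theorem noisy_histogram_dp_simple_case
    (K : ℕ) (hK : 2 ≤ K)
    (ε δ : ℝ) (hε : ε ∈ Set.Ioo (0 : ℝ) 1) (hδ : δ ∈ Set.Ioo (0 : ℝ) 1)
    (Δ : ℕ) (hΔ : 1 ≤ Δ)
    (p r : ℝ)
    (hp : p = Real.exp (-(0.2 * ε / (Δ : ℝ))))
    (hr : r = 3 * (1 + Real.log (1 / δ)))
    (R R' : Fin K → ℕ)
    (b b' : Fin K) (hbb : b ≠ b')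
    (hb : R b = R' b + Δ)
    (hb' : R' b' = R b' + Δ)
    (hrest : ∀ c, c ≠ b → c ≠ b' → R c = R' c) :
    ∀ S : Set (Fin K → ℕ),
      setProb (noisyHist K r p R) S ≤
        ENNReal.ofReal (Real.exp (2 * ε)) * setProb (noisyHist K r p R') S +
          ENNReal.ofReal (2 * δ) ∧
      setProb (noisyHist K r p R') S ≤
        ENNReal.ofReal (Real.exp (2 * ε)) * setProb (noisyHist K r p R) S +
          ENNReal.ofReal (2 * δ) := by
  intro S
  constructor
  · exact oneSided K ε δ hε hδ Δ hΔ p r hp hr R R' b b' hbb hb hb' hrest S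
  · exact oneSided K ε δ hε hδ Δ hΔ p r hp hr R' R b' b (Ne.symm hbb) hb' hb
      (fun c hc1 hc2 => (hrest c hc2 hc1).symm) S
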